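/- For every α > 1, the linear map T_α(x,y) = (−x, α y/2) does not map the convex set S (bounded by the interval [−1,1] and the graph of f) into itself; i.e., there exists x ∈ [−1,1] with f(x) − α·(1/2)f(−x) < 0. -/

import Mathlib

open Real

noncomputable def paperF (x : ℝ) : ℝ :=
  ((1 - x) / 2) ^ (2 : ℕ) * ((1 + x) / 2) ^ ((1 : ℝ) / 2) +
    2 * ((1 - x) / 2) ^ ((1 : ℝ) / 2) * ((1 + x) / 2) ^ ((5 : ℝ) / 2) +
    (1 - x ^ 2) / 4

lemma aux_key (α s : ℝ) (hs0 : 0 < s) (hs4 : s < 1 / 4)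
    (hα4 : α * (1 - 4 * s) = 1 + 4 * s) :
    s + 2 * s ^ 5 + s ^ 2 * (1 - s ^ 2) < α * s * (1 - s ^ 2) ^ 3 := by
  have h14 : (0:ℝ) < 1 - 4 * s := by linarith
  have h2 : (1 - 4 * s) * (α * s * (1 - s ^ 2) ^ 3 -
      (s + 2 * s ^ 5 + s ^ 2 * (1 - s ^ 2))) =
      7 * s ^ 2 + s ^ 3 - 11 * s ^ 4 - 3 * s ^ 5 + 20 * s ^ 6 - s ^ 7 - 4 * s ^ 8 := by
    linear_combination (s * (1 - s ^ 2) ^ 3) * hα4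
  have hs2b : s ^ 2 < 1 / 16 := by nlinarith
  have hs3b : s ^ 3 < 1 / 64 := by nlinarith
  have hs5b : s ^ 5 < 1 / 1024 := by nlinarith
  have hs6b : s ^ 6 < 1 / 4096 := by nlinarith
  have hR : (0:ℝ) < 7 + s - 11 * s ^ 2 - 3 * s ^ 3 + 20 * s ^ 4 - s ^ 5 - 4 * s ^ 6 := by
    nlinarith [sq_nonneg (s ^ 2), pow_pos hs0 4]
  have hQ : (0:ℝ) < 7 * s ^ 2 + s ^ 3 - 11 * s ^ 4 - 3 * s ^ 5 + 20 * s ^ 6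
      - s ^ 7 - 4 * s ^ 8 := by
    have := mul_pos (mul_pos hs0 hs0) hR
    nlinarith [this]
  nlinarith [h2, hQ, h14]

lemma aux_le (s a : ℝ) (hs0 : 0 ≤ s) (hs1 : s ≤ 1) (ha0 : 0 ≤ a) (ha1 : a ≤ 1) :
    (1 - s ^ 2) ^ (2:ℕ) * s + 2 * a * s ^ 5 + s ^ 2 * (1 - s ^ 2) ≤
      s + 2 * s ^ 5 + s ^ 2 * (1 - s ^ 2) := by
  have hss : s ^ 2 ≤ 1 := by nlinarith
  nlinarith [mul_nonneg (pow_nonneg hs0 5) (sub_nonneg.mpr ha1),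
    mul_nonneg (mul_nonneg hs0 (sq_nonneg s)) (by linarith : (0:ℝ) ≤ 2 - s ^ 2)]

lemma aux_ge (s a b : ℝ) (hs0 : 0 ≤ s) (ha0 : 0 ≤ a) (hu0 : 0 ≤ 1 - s ^ 2)
    (hb : (1 - s ^ 2) ^ 3 ≤ b) :
    2 * s * (1 - s ^ 2) ^ 3 ≤
      (s ^ 2) ^ (2:ℕ) * a + 2 * s * b + s ^ 2 * (1 - s ^ 2) := by
  nlinarith [mul_nonneg (pow_nonneg (mul_nonneg hs0 hs0) 2) ha0,
    mul_nonneg (mul_nonneg hs0 hs0) hu0,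
    mul_le_mul_of_nonneg_left hb (by positivity : (0:ℝ) ≤ 2 * s)]

/-- For every α > 1 the map T_α(x,y) = (−x, αy/2) does not map
S = {(x,y) : x ∈ [−1,1], 0 ≤ y ≤ f(x)} into itself: there is x ∈ [−1,1] with
f(x) − α·(1/2)·f(−x) < 0. -/
theorem stmt_7 (α : ℝ) (hα : 1 < α) :
    ∃ x ∈ Set.Icc (-1 : ℝ) 1, paperF x - α * ((1 / 2) * paperF (-x)) < 0 := by
  set s : ℝ := (α - 1) / (4 * (α + 1)) with hs_def
  have hden : (0:ℝ) < 4 * (α + 1) := by linarith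
  have hs0 : 0 < s := div_pos (by linarith) hden
  have hs4 : s < 1 / 4 := by
    rw [hs_def, div_lt_iff₀ hden]; nlinarith
  have hkey : 4 * (α + 1) * s = α - 1 := by
    rw [hs_def]; field_simp
  have hα4 : α * (1 - 4 * s) = 1 + 4 * s := by linear_combination -hkey
  have hs2lt : s ^ 2 < 1 := by nlinarith
  have hu0 : (0:ℝ) ≤ 1 - s ^ 2 := by nlinarith
  have hu0' : (0:ℝ) < 1 - s ^ 2 := by nlinarith
  have hu1 : 1 - s ^ 2 ≤ 1 := by nlinarith
  have hs2 : ((s ^ 2 : ℝ)) ^ ((1:ℝ)/2) = s := by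
    rw [← Real.rpow_natCast s 2, ← Real.rpow_mul hs0.le]
    norm_num
  have hs5 : ((s ^ 2 : ℝ)) ^ ((5:ℝ)/2) = s ^ 5 := by
    rw [← Real.rpow_natCast s 2, ← Real.rpow_mul hs0.le]
    norm_num
  have ha0 : 0 ≤ (1 - s ^ 2) ^ ((1:ℝ)/2) := Real.rpow_nonneg hu0 _
  have ha1 : (1 - s ^ 2) ^ ((1:ℝ)/2) ≤ 1 := Real.rpow_le_one hu0 hu1 (by norm_num)
  have hb : (1 - s ^ 2) ^ 3 ≤ (1 - s ^ 2) ^ ((5:ℝ)/2) := by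
    calc (1 - s ^ 2) ^ 3 = (1 - s ^ 2) ^ ((3:ℕ):ℝ) := (Real.rpow_natCast _ 3).symm
      _ ≤ (1 - s ^ 2) ^ ((5:ℝ)/2) :=
        Real.rpow_le_rpow_of_exponent_ge hu0' hu1 (by norm_num)
  refine ⟨-1 + 2 * s ^ 2, ⟨by nlinarith, by nlinarith⟩, ?_⟩
  have e1 : paperF (-1 + 2 * s ^ 2) =
      (1 - s ^ 2) ^ (2:ℕ) * s + 2 * (1 - s ^ 2) ^ ((1:ℝ)/2) * s ^ 5
        + s ^ 2 * (1 - s ^ 2) := by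
    unfold paperF
    rw [show (1 - (-1 + 2 * s ^ 2)) / 2 = 1 - s ^ 2 from by ring,
        show (1 + (-1 + 2 * s ^ 2)) / 2 = s ^ 2 from by ring, hs2, hs5]
    ring
  have e2 : paperF (-(-1 + 2 * s ^ 2)) =
      (s ^ 2) ^ (2:ℕ) * (1 - s ^ 2) ^ ((1:ℝ)/2)
        + 2 * s * (1 - s ^ 2) ^ ((5:ℝ)/2) + s ^ 2 * (1 - s ^ 2) := by
    unfold paperF
    rw [show (1 - -(-1 + 2 * s ^ 2)) / 2 = s ^ 2 from by ring,
        show (1 + -(-1 + 2 * s ^ 2)) / 2 = 1 - s ^ 2 from by ring, hs2]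
    ring
  rw [e1, e2]
  have hle := aux_le s ((1 - s ^ 2) ^ ((1:ℝ)/2)) hs0.le (by linarith) ha0 ha1
  have hge := aux_ge s ((1 - s ^ 2) ^ ((1:ℝ)/2)) ((1 - s ^ 2) ^ ((5:ℝ)/2))
    hs0.le ha0 hu0 hb
  have key := aux_key α s hs0 hs4 hα4
  have hα0 : (0:ℝ) ≤ α / 2 := by linarith
  have hmul := mul_le_mul_of_nonneg_left hge hα0
  nlinarith [hmul, hle, key]
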